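/- Let Z be a nonempty compact connected topological 3-manifold (a topological space that is a charted space modeled on EuclideanSpace ℝ (Fin 3)) which is not simply connected. Then the cone C(Z) is not homeomorphic to the closed unit ball in EuclideanSpace ℝ (Fin 4). -/

import Mathlib

set_option maxHeartbeats 1000000

open Set MeasureTheory

local notation "E4" => EuclideanSpace ℝ (Fin 4)
local notation "Ball" => Metric.closedBall (0:E4) 1

noncomputable section

namespace CNHB

lemma span_pair_ne_top (a b : E4) : Submodule.span ℝ ({a, b} : Set E4) ≠ ⊤ := by
  classical
  intro htop
  have h1 : ((({a, b} : Finset E4)) : Set E4) = ({a, b} : Set E4) := by simp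
  have h2 : Module.finrank ℝ (Submodule.span ℝ (({a, b} : Finset E4) : Set E4)) ≤ 2 := by
    refine le_trans (finrank_span_finset_le_card _) ?_
    simpa using Finset.card_insert_le a {b}
  rw [h1, htop] at h2
  rw [finrank_top] at h2
  simp [finrank_euclideanSpace] at h2
lemma exists_generic (p : E4) (f g : ℕ → E4) :
    ∃ q : E4, q ≠ p ∧
      (∀ k, q ∉ AffineSubspace.mk' p (Submodule.span ℝ {f k - p, f (k+1) - p})) ∧
      (∀ k, q ∉ AffineSubspace.mk' p (Submodule.span ℝ {g k - p, g (k+1) - p})) := by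
  have hA : ∀ (v w : E4), volume ((AffineSubspace.mk' p (Submodule.span ℝ {v - p, w - p}) : AffineSubspace ℝ E4) : Set E4) = 0 := by
    intro v w
    refine Measure.addHaar_affineSubspace _ _ ?_
    intro htop
    have hd : (AffineSubspace.mk' p (Submodule.span ℝ {v - p, w - p})).direction = Submodule.span ℝ {v - p, w - p} :=
      AffineSubspace.direction_mk' _ _
    rw [htop, AffineSubspace.direction_top] at hd
    exact span_pair_ne_top _ _ hd.symm
  set U : Set E4 := {p} ∪ ((⋃ k : ℕ, ((AffineSubspace.mk' p (Submodule.span ℝ {f k - p, f (k+1) - p}) : AffineSubspace ℝ E4) : Set E4)) ∪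
      (⋃ k : ℕ, ((AffineSubspace.mk' p (Submodule.span ℝ {g k - p, g (k+1) - p}) : AffineSubspace ℝ E4) : Set E4))) with hU
  have hUvol : volume U = 0 := by
    refine measure_union_null (by simp) (measure_union_null ?_ ?_) <;>
    · refine measure_iUnion_null ?_
      intro k; exact hA _ _
  have hUne : U ≠ univ := by
    intro h
    rw [h] at hUvol
    simp at hUvol
  obtain ⟨q, hq⟩ := (Set.ne_univ_iff_exists_notMem U).1 hUne
  rw [hU] at hq
  simp only [Set.mem_union, Set.mem_singleton_iff, Set.mem_iUnion, not_or, not_exists] at hq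
  exact ⟨q, hq.1, hq.2.1, hq.2.2⟩

lemma cone_mem (p q v w z : E4) (hz : z ∈ segment ℝ v w) (hps : p ∉ segment ℝ v w)
    (hp : p ∈ segment ℝ z q) :
    q ∈ AffineSubspace.mk' p (Submodule.span ℝ ({v - p, w - p} : Set E4)) := by
  obtain ⟨c, d, hc, hd, hcd, hzeq⟩ := hz
  obtain ⟨A, b, hA, hb, hab, hpeq⟩ := hp
  have hbne : b ≠ 0 := by
    rintro rfl
    have hA1 : A = 1 := by linarith
    rw [hA1, zero_smul, one_smul, add_zero] at hpeq
    exact hps (hpeq ▸ ⟨c, d, hc, hd, hcd, hzeq⟩)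
  rw [AffineSubspace.mem_mk']
  have hv : q -ᵥ p = q - p := rfl
  rw [hv]
  have key : b • (q - p) = (-(A*c)) • (v - p) + (-(A*d)) • (w - p) := by
    have hA' : A = 1 - b := by linarith
    have hd' : d = 1 - c := by linarith
    subst hA' hd'
    rw [← hzeq] at hpeq
    -- hpeq : (1-b) • (c • v + (1-c) • w) + b • q = p
    have : b • (q - p) = (p - (1-b) • (c • v + (1-c) • w)) - b • p := by
      rw [← hpeq]; module
    rw [this]; module
  have : q - p ∈ Submodule.span ℝ ({v - p, w - p} : Set E4) := by
    rw [← Submodule.smul_mem_iff _ hbne, key]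
    exact Submodule.add_mem _
      (Submodule.smul_mem _ _ (Submodule.subset_span (by simp)))
      (Submodule.smul_mem _ _ (Submodule.subset_span (by simp)))
  exact this

lemma starConvex_W (p q : E4) : StarConvex ℝ q {z : E4 | p ∉ segment ℝ z q} := by
  intro z hz a b ha hb hab
  simp only [Set.mem_setOf_eq] at hz ⊢
  intro hp
  refine hz ?_
  have hmem : a • q + b • z ∈ segment ℝ z q := ⟨b, a, hb, ha, by linarith, by module⟩
  exact (convex_segment z q).segment_subset hmem (right_mem_segment ℝ z q) hp

lemma contractible_W (p q : E4) (hpq : p ≠ q) :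
    ContractibleSpace ({z : E4 | p ∉ segment ℝ z q} : Set E4) :=
  (starConvex_W p q).contractibleSpace ⟨q, by simp [segment_same]; exact fun h => hpq h⟩

lemma seg_near {u v z : E4} (h : z ∈ segment ℝ u v) : dist z u ≤ dist v u := by
  obtain ⟨c, d, hc, hd, hcd, rfl⟩ := h
  have : c • u + d • v - u = d • (v - u) := by
    have hc' : c = 1 - d := by linarith
    subst hc'; module
  rw [dist_eq_norm, dist_eq_norm, this, norm_smul]
  simp only [Real.norm_eq_abs, abs_of_nonneg hd]
  nlinarith [norm_nonneg (v - u)]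

lemma cover_lemma (n : ℕ) (hn : 0 < n) (t : ℝ) (h0 : 0 ≤ t) (h1 : t ≤ 1) :
    ∃ j : ℕ, j < n ∧ (j:ℝ)/n ≤ t ∧ t ≤ ((j:ℝ)+1)/n := by
  have hnR : (0:ℝ) < n := by exact_mod_cast hn
  by_cases ht : t = 1
  · subst ht
    have hc : ((n-1:ℕ):ℝ) = (n:ℝ) - 1 := by
      rw [Nat.cast_sub hn]; simp
    refine ⟨n-1, by omega, ?_, ?_⟩
    · rw [div_le_one hnR, hc]; linarith
    · rw [le_div_iff₀ hnR, hc]; linarith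
  · have ht1 : t < 1 := lt_of_le_of_ne h1 ht
    have h0' : (0:ℝ) ≤ (n:ℝ) * t := by positivity
    have hj0nn : 0 ≤ ⌊(n:ℝ) * t⌋ := Int.floor_nonneg.2 h0'
    have hjlt : ⌊(n:ℝ) * t⌋ < (n:ℤ) := by
      rw [Int.floor_lt]
      push_cast
      nlinarith
    have hcast : ((⌊(n:ℝ) * t⌋.toNat : ℕ) : ℝ) = (⌊(n:ℝ) * t⌋ : ℝ) := by
      exact_mod_cast Int.toNat_of_nonneg hj0nn
    refine ⟨⌊(n:ℝ) * t⌋.toNat, by omega, ?_, ?_⟩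
    · rw [div_le_iff₀ hnR, hcast, mul_comm]
      exact Int.floor_le _
    · rw [le_div_iff₀ hnR, hcast, mul_comm]
      exact le_of_lt (Int.lt_floor_add_one _)

lemma poly_approx (p : E4) {x y : {z : E4 // z ≠ p}} (a : Path x y) :
    ∃ (n : ℕ) (f : ℕ → E4) (P : Path x y),
      a.Homotopic P ∧
      (∀ t : unitInterval, ∃ k < n, ((P t : E4)) ∈ segment ℝ (f k) (f (k+1))) ∧
      (∀ k < n, p ∉ segment ℝ (f k) (f (k+1))) := by
  classical
  set γ : unitInterval → E4 := fun s => ((a s : {z : E4 // z ≠ p}) : E4) with hγdef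
  have hγcont : Continuous γ := continuous_subtype_val.comp a.continuous
  set g : ℝ → E4 := fun t => ((a.extend t : {z : E4 // z ≠ p}) : E4) with hgdef
  have hgcont : Continuous g := continuous_subtype_val.comp a.continuous_extend
  have hgproj : ∀ t : ℝ, g t = γ (Set.projIcc 0 1 zero_le_one t) := fun t => rfl
  have hgγ : ∀ t : unitInterval, g ↑t = γ t := by
    intro t
    rw [hgdef]
    simp only [Path.extend_extends' a t]; rfl
  set K : Set E4 := Set.range γ with hK
  have hKc : IsCompact K := isCompact_range hγcont
  have hKne : K.Nonempty := ⟨γ 0, Set.mem_range_self 0⟩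
  have hpK : p ∉ K := by
    rintro ⟨t, ht⟩
    exact (a t).2 ht
  set δ : ℝ := Metric.infDist p K with hδdef
  have hδ : 0 < δ := (hKc.isClosed.notMem_iff_infDist_pos hKne).1 hpK
  have hgK : ∀ t : ℝ, g t ∈ K := fun t => ⟨_, (hgproj t).symm⟩
  have hgdist : ∀ t : ℝ, δ ≤ dist p (g t) := fun t => Metric.infDist_le_dist_of_mem (hgK t)
  -- uniform continuity
  obtain ⟨η, hη, hmod⟩ := Metric.uniformContinuous_iff.mp
    (CompactSpace.uniformContinuous_of_continuous hγcont) (δ/2) (by positivity)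
  have gmod : ∀ s t : ℝ, dist s t < η → dist (g s) (g t) < δ/2 := by
    intro s t hst
    rw [hgproj s, hgproj t]
    refine hmod (lt_of_le_of_lt ?_ hst)
    simpa using (LipschitzWith.projIcc (zero_le_one (α := ℝ))).dist_le_mul s t
  obtain ⟨n₀, hn₀⟩ := exists_nat_one_div_lt hη
  set n : ℕ := n₀ + 1 with hndef
  have hn : 0 < n := Nat.succ_pos _
  have hnR : (0:ℝ) < n := by exact_mod_cast hn
  have hstep : (1:ℝ)/n < η := by
    have : ((n:ℝ)) = (n₀:ℝ) + 1 := by push_cast [hndef]; ring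
    rw [this]; exact hn₀
  set f : ℕ → E4 := fun k => g (k / n) with hfdef
  set cl : ℝ → ℝ := fun u => max 0 (min 1 u) with hcldef
  have hclcont : Continuous cl := continuous_const.max (continuous_const.min continuous_id)
  have hcl0 : ∀ u : ℝ, u ≤ 0 → cl u = 0 := by
    intro u hu; rw [hcldef]; simp only [max_eq_left_iff]; exact le_trans (min_le_right _ _) hu
  have hcl1 : ∀ u : ℝ, 1 ≤ u → cl u = 1 := by
    intro u hu; rw [hcldef]; simp [min_eq_left hu]
  have hclmem : ∀ u : ℝ, 0 ≤ cl u ∧ cl u ≤ 1 := by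
    intro u; constructor
    · exact le_max_left _ _
    · rw [hcldef]; simp only [max_le_iff]; exact ⟨zero_le_one, min_le_left _ _⟩
  set Pf : ℝ → E4 := fun t => f 0 + ∑ k ∈ Finset.range n, cl ((n:ℝ)*t - k) • (f (k+1) - f k) with hPfdef
  have hPcont : Continuous Pf := by
    refine continuous_const.add (continuous_finset_sum _ fun k _ => Continuous.fun_smul ?_ continuous_const)
    exact hclcont.comp ((continuous_const.mul continuous_id).sub continuous_const)
  -- closed form
  have key : ∀ j, j < n → ∀ t : ℝ, (j:ℝ)/n ≤ t → t ≤ ((j:ℝ)+1)/n →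
      Pf t = f j + cl ((n:ℝ)*t - j) • (f (j+1) - f j) := by
    intro j hj t htl htr
    have hjt : (j:ℝ) ≤ (n:ℝ) * t := by
      rw [div_le_iff₀ hnR] at htl; linarith [htl]
    have hjt' : (n:ℝ) * t ≤ (j:ℝ) + 1 := by
      rw [le_div_iff₀ hnR] at htr; linarith [htr]
    have hzero : ∀ k ∈ Finset.range n, k ∉ Finset.range (j+1) →
        cl ((n:ℝ)*t - k) • (f (k+1) - f k) = 0 := by
      intro k _ hk2
      have hk3 : j + 1 ≤ k := by
        simp only [Finset.mem_range, not_lt] at hk2; omega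
      have hk4 : (j:ℝ) + 1 ≤ (k:ℝ) := by exact_mod_cast hk3
      rw [hcl0 _ (by linarith), zero_smul]
    have hsub : Finset.range (j+1) ⊆ Finset.range n := Finset.range_subset_range.2 (by omega)
    have hsum : ∑ k ∈ Finset.range n, cl ((n:ℝ)*t - k) • (f (k+1) - f k)
        = ∑ k ∈ Finset.range (j+1), cl ((n:ℝ)*t - k) • (f (k+1) - f k) :=
      (Finset.sum_subset hsub hzero).symm
    have hones : ∀ k ∈ Finset.range j, cl ((n:ℝ)*t - k) • (f (k+1) - f k) = f (k+1) - f k := by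
      intro k hk
      have hk' : k < j := Finset.mem_range.1 hk
      have hk'' : (k:ℝ) + 1 ≤ (j:ℝ) := by exact_mod_cast hk'
      rw [hcl1 _ (by linarith), one_smul]
    rw [hPfdef]
    simp only
    rw [hsum, Finset.sum_range_succ, Finset.sum_congr rfl hones, Finset.sum_range_sub (fun k => f k)]
    abel
  -- endpoints
  have hf0 : f 0 = (x : E4) := by
    rw [hfdef]
    simp only [Nat.cast_zero, zero_div]
    rw [hgdef]; simp only [Path.extend_zero, a.source]
  have hf1 : f n = (y : E4) := by
    rw [hfdef]
    simp only [div_self hnR.ne']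
    rw [hgdef]; simp only [Path.extend_one, a.target]
  have hP0 : Pf 0 = (x : E4) := by
    rw [key 0 hn 0 (by simp) (by positivity)]
    rw [hcl0 _ (by simp), zero_smul, add_zero, hf0]
  have hP1 : Pf 1 = (y : E4) := by
    have h1 : ((n₀:ℝ))/n ≤ 1 := by
      rw [div_le_one hnR]; exact_mod_cast Nat.le_succ n₀
    have h2 : (1:ℝ) ≤ ((n₀:ℝ)+1)/n := by
      rw [le_div_iff₀ hnR]
      have : ((n:ℝ)) = (n₀:ℝ) + 1 := by push_cast [hndef]; ring
      rw [this]; linarith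
    rw [key n₀ (by omega) 1 h1 h2]
    have : (n:ℝ) * 1 - n₀ = 1 := by
      have : ((n:ℝ)) = (n₀:ℝ) + 1 := by push_cast [hndef]; ring
      rw [this]; ring
    rw [this, hcl1 _ le_rfl, one_smul]
    have hnn : n₀ + 1 = n := rfl
    rw [hnn, hf1]
    abel
  -- distances
  have hfdist : ∀ j : ℕ, δ ≤ dist p (f j) := fun j => hgdist _
  have hseg : ∀ j : ℕ, j < n → dist (f (j+1)) (f j) < δ/2 := by
    intro j hj
    apply gmod
    rw [Real.dist_eq]
    have hc : (((j+1:ℕ)):ℝ) = (j:ℝ)+1 := by push_cast; ring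
    have e : ((j:ℝ)+1)/n - (j:ℝ)/n = 1/n := by field_simp; ring
    rw [hc, e, abs_of_nonneg (by positivity : (0:ℝ) ≤ 1/(n:ℝ))]
    exact hstep
  -- homotopy avoids p
  have Hne : ∀ (s t : ℝ), 0 ≤ s → s ≤ 1 → 0 ≤ t → t ≤ 1 →
      ((1-s) • g t + s • Pf t) ≠ p := by
    intro s t hs0 hs1 ht0 ht1
    obtain ⟨j, hj, hjl, hjr⟩ := cover_lemma n hn t ht0 ht1
    have hkey := key j hj t hjl hjr
    have hd1 : dist (g t) (f j) < δ/2 := by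
      apply gmod
      rw [Real.dist_eq]
      have h1 : t - (j:ℝ)/n ≥ 0 := by linarith
      have h2 : t - (j:ℝ)/n ≤ 1/n := by
        have : ((j:ℝ)+1)/n - (j:ℝ)/n = 1/n := by field_simp; ring
        linarith
      rw [abs_of_nonneg h1]
      linarith
    have hd2 : dist (Pf t) (f j) < δ/2 := by
      rw [hkey, dist_eq_norm, add_sub_cancel_left, norm_smul, Real.norm_eq_abs,
        abs_of_nonneg (hclmem _).1]
      calc cl ((n:ℝ)*t - j) * ‖f (j+1) - f j‖ ≤ 1 * ‖f (j+1) - f j‖ := by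
            have := (hclmem ((n:ℝ)*t - j)).2
            have hnn := norm_nonneg (f (j+1) - f j)
            nlinarith
        _ = dist (f (j+1)) (f j) := by rw [one_mul, dist_eq_norm]
        _ < δ/2 := hseg j hj
    have hd3 : dist ((1-s) • g t + s • Pf t) (f j) ≤ δ/2 := by
      have heq : (1-s) • g t + s • Pf t - f j = (1-s) • (g t - f j) + s • (Pf t - f j) := by
        module
      rw [dist_eq_norm, heq]
      have h4 := norm_add_le ((1-s) • (g t - f j)) (s • (Pf t - f j))
      rw [norm_smul, norm_smul, Real.norm_eq_abs, Real.norm_eq_abs,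
        abs_of_nonneg (by linarith : (0:ℝ) ≤ 1 - s), abs_of_nonneg hs0] at h4
      have e1 : ‖g t - f j‖ = dist (g t) (f j) := (dist_eq_norm _ _).symm
      have e2 : ‖Pf t - f j‖ = dist (Pf t) (f j) := (dist_eq_norm _ _).symm
      rw [e1, e2] at h4
      have k1 : (1-s) * dist (g t) (f j) ≤ (1-s) * (δ/2) :=
        mul_le_mul_of_nonneg_left hd1.le (by linarith)
      have k2 : s * dist (Pf t) (f j) ≤ s * (δ/2) :=
        mul_le_mul_of_nonneg_left hd2.le hs0
      linarith
    intro heq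
    rw [heq] at hd3
    have := hfdist j
    linarith
  have hPt_ne : ∀ t : unitInterval, Pf ↑t ≠ p := by
    intro t
    have := Hne 1 ↑t zero_le_one le_rfl t.2.1 t.2.2
    simpa using this
  -- the polygonal path
  set P : Path x y :=
    { toFun := fun t => (⟨Pf ↑t, hPt_ne t⟩ : {z : E4 // z ≠ p})
      continuous_toFun := by
        exact Continuous.subtype_mk (hPcont.comp continuous_subtype_val) _
      source' := Subtype.ext (by simpa using hP0)
      target' := Subtype.ext (by simpa using hP1) } with hPdef
  have hHne' : ∀ q : unitInterval × unitInterval,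
      ((1-(q.1:ℝ)) • g ↑q.2 + (q.1:ℝ) • Pf ↑q.2) ≠ p :=
    fun q => Hne _ _ q.1.2.1 q.1.2.2 q.2.2.1 q.2.2.2
  have hhom : a.Homotopic P := by
    refine ⟨⟨⟨⟨fun q => (⟨(1-(q.1:ℝ)) • g ↑q.2 + (q.1:ℝ) • Pf ↑q.2, hHne' q⟩ : {z : E4 // z ≠ p}), ?_⟩, ?_, ?_⟩, ?_⟩⟩
    · refine Continuous.subtype_mk ?_ _
      have c1 : Continuous fun q : unitInterval × unitInterval => (q.1 : ℝ) :=
        continuous_subtype_val.comp continuous_fst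
      have c2 : Continuous fun q : unitInterval × unitInterval => (q.2 : ℝ) :=
        continuous_subtype_val.comp continuous_snd
      exact ((continuous_const.sub c1).smul (hgcont.comp c2)).add (c1.smul (hPcont.comp c2))
    · intro t
      apply Subtype.ext
      simp only [Set.Icc.coe_zero, sub_zero, one_smul, zero_smul, add_zero]
      rw [hgγ t, hγdef]
      rfl
    · intro t
      apply Subtype.ext
      simp only [Set.Icc.coe_one, sub_self, zero_smul, one_smul, zero_add]
      rfl
    · intro s t ht
      simp only [Set.mem_insert_iff, Set.mem_singleton_iff] at ht
      apply Subtype.ext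
      rcases ht with rfl | rfl
      · show (1-(s:ℝ)) • g ↑(0:unitInterval) + (s:ℝ) • Pf ↑(0:unitInterval) = ((a 0 : {z : E4 // z ≠ p}) : E4)
        have e0 : g ↑(0:unitInterval) = (x : E4) := by
          rw [hgγ 0, hγdef]; simp [a.source]
        have e1 : Pf ↑(0:unitInterval) = (x : E4) := by simpa using hP0
        rw [e0, e1, Convex.combo_self (by ring) ((x : E4))]
        simp [a.source]
      · show (1-(s:ℝ)) • g ↑(1:unitInterval) + (s:ℝ) • Pf ↑(1:unitInterval) = ((a 1 : {z : E4 // z ≠ p}) : E4)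
        have e0 : g ↑(1:unitInterval) = (y : E4) := by
          rw [hgγ 1, hγdef]; simp [a.target]
        have e1 : Pf ↑(1:unitInterval) = (y : E4) := by simpa using hP1
        rw [e0, e1, Convex.combo_self (by ring) ((y : E4))]
        simp [a.target]
  refine ⟨n, f, P, hhom, ?_, ?_⟩
  · intro t
    obtain ⟨j, hj, hjl, hjr⟩ := cover_lemma n hn ↑t t.2.1 t.2.2
    refine ⟨j, hj, ?_⟩
    have : ((P t : E4)) = Pf ↑t := rfl
    rw [this, key j hj ↑t hjl hjr]
    obtain ⟨hc0, hc1⟩ := hclmem ((n:ℝ)*↑t - j)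
    exact ⟨1 - cl ((n:ℝ)*↑t - j), cl ((n:ℝ)*↑t - j), by linarith, hc0, by ring, by module⟩
  · intro k hk hmem
    have h1 := seg_near hmem
    have h2 := hseg k hk
    have h3 := hfdist k
    linarith

lemma punctured_homotopic (p : E4) {x y : {z : E4 // z ≠ p}} (a b : Path x y) :
    a.Homotopic b := by
  obtain ⟨n, f, Pa, haP, hacov, havoid⟩ := poly_approx p a
  obtain ⟨m, g, Pb, hbP, hbcov, hbvoid⟩ := poly_approx p b
  obtain ⟨q, hqp, hqa, hqb⟩ := exists_generic p f g
  set W : Set E4 := {z : E4 | p ∉ segment ℝ z q} with hWdef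
  haveI : ContractibleSpace ↥W := contractible_W p q (fun h => hqp h.symm)
  have hPaW : ∀ t : unitInterval, ((Pa t : E4)) ∈ W := by
    intro t
    obtain ⟨k, hk, hseg⟩ := hacov t
    intro hp
    exact hqa k (cone_mem p q (f k) (f (k+1)) _ hseg (havoid k hk) hp)
  have hPbW : ∀ t : unitInterval, ((Pb t : E4)) ∈ W := by
    intro t
    obtain ⟨k, hk, hseg⟩ := hbcov t
    intro hp
    exact hqb k (cone_mem p q (g k) (g (k+1)) _ hseg (hbvoid k hk) hp)
  have hxW : (x : E4) ∈ W := by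
    have := hPaW 0
    rwa [Pa.source] at this
  have hyW : (y : E4) ∈ W := by
    have := hPaW 1
    rwa [Pa.target] at this
  set x' : ↥W := ⟨(x : E4), hxW⟩ with hx'
  set y' : ↥W := ⟨(y : E4), hyW⟩ with hy'
  set Pa' : Path x' y' :=
    { toFun := fun t => ⟨((Pa t : E4)), hPaW t⟩
      continuous_toFun := (continuous_subtype_val.comp Pa.continuous).subtype_mk _
      source' := Subtype.ext (by simp [Pa.source]; rfl)
      target' := Subtype.ext (by simp [Pa.target]; rfl) } with hPa'
  set Pb' : Path x' y' :=
    { toFun := fun t => ⟨((Pb t : E4)), hPbW t⟩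
      continuous_toFun := (continuous_subtype_val.comp Pb.continuous).subtype_mk _
      source' := Subtype.ext (by simp [Pb.source]; rfl)
      target' := Subtype.ext (by simp [Pb.target]; rfl) } with hPb'
  have hW2 : Pa'.Homotopic Pb' := SimplyConnectedSpace.paths_homotopic Pa' Pb'
  have hWsub : ∀ w : ↥W, (w : E4) ≠ p := by
    intro w hw
    exact w.2 (hw ▸ left_mem_segment ℝ (w : E4) q)
  set ι : C(↥W, {z : E4 // z ≠ p}) :=
    ⟨fun w => ⟨(w : E4), hWsub w⟩, (continuous_subtype_val).subtype_mk _⟩ with hι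
  have h3 := hW2.map ι
  have e1 : (Pa'.map ι.continuous : Path (ι x') (ι y')) = (Pa : Path (ι x') (ι y')) := by
    ext t
    rfl
  have e2 : (Pb'.map ι.continuous : Path (ι x') (ι y')) = (Pb : Path (ι x') (ι y')) := by
    ext t
    rfl
  rw [e1, e2] at h3
  exact haP.trans (h3.trans hbP.symm)

lemma retract_homotopic {X' Y : Type*} [TopologicalSpace X'] [TopologicalSpace Y]
    {x y : X'} (ι : C(X', Y)) (r : C(Y, X')) (hr : ∀ z, r (ι z) = z)
    (a b : Path x y) (hab : (a.map ι.continuous).Homotopic (b.map ι.continuous)) :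
    a.Homotopic b := by
  obtain ⟨H⟩ := hab
  refine ⟨⟨⟨⟨fun q => r (H q), r.continuous.comp H.continuous⟩, ?_, ?_⟩, ?_⟩⟩
  · intro t
    show r (H (0, t)) = a t
    rw [show H (0, t) = ι (a t) from H.apply_zero t]
    exact hr (a t)
  · intro t
    show r (H (1, t)) = b t
    rw [show H (1, t) = ι (b t) from H.apply_one t]
    exact hr (b t)
  · intro s t ht
    have h1 := H.prop' s t ht
    show r (H (s, t)) = a t
    rw [show H (s, t) = ι (a t) from h1]
    exact hr (a t)

lemma sc_of_retract {X' Y : Type*} [TopologicalSpace X'] [TopologicalSpace Y] [Nonempty X']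
    (ι : C(X', Y)) (r : C(Y, X')) (hr : ∀ z, r (ι z) = z) [SimplyConnectedSpace Y] :
    SimplyConnectedSpace X' := by
  rw [simply_connected_iff_paths_homotopic']
  constructor
  · refine ⟨inferInstance, fun x y => ?_⟩
    have h1 : Joined (ι x) (ι y) := PathConnectedSpace.joined _ _
    obtain ⟨γ⟩ := h1
    have h2 : Joined (r (ι x)) (r (ι y)) := ⟨γ.map r.continuous⟩
    rwa [hr, hr] at h2
  · intro x y a b
    exact retract_homotopic ι r hr a b
      (SimplyConnectedSpace.paths_homotopic _ _)

lemma rank_E4 : 1 < Module.rank ℝ E4 := by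
  have h1 : Module.finrank ℝ E4 = 4 := by
    simp [finrank_euclideanSpace]
  have h2 : (Module.finrank ℝ E4 : Cardinal) = Module.rank ℝ E4 := Module.finrank_eq_rank ℝ E4
  rw [← h2, h1]
  norm_num

lemma punctured_pathConnected (p : E4) : PathConnectedSpace {z : E4 // z ≠ p} := by
  have hpc : IsPathConnected ({p}ᶜ : Set E4) :=
    isPathConnected_compl_singleton_of_one_lt_rank rank_E4 p
  obtain ⟨x₀, hx₀, hjoin⟩ := hpc
  refine ⟨⟨⟨x₀, hx₀⟩⟩, fun x y => ?_⟩
  have hx : (x : E4) ∈ ({p}ᶜ : Set E4) := x.2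
  have hy : (y : E4) ∈ ({p}ᶜ : Set E4) := y.2
  have j1 : JoinedIn ({p}ᶜ : Set E4) (x : E4) (y : E4) :=
    JoinedIn.trans (JoinedIn.symm (hjoin hx)) (hjoin hy)
  obtain ⟨γ, hγ⟩ := j1
  exact ⟨⟨⟨fun t => ⟨γ t, hγ t⟩, Continuous.subtype_mk γ.continuous _⟩,
    Subtype.ext (by simp), Subtype.ext (by simp)⟩⟩

lemma punctured_sc (p : E4) : SimplyConnectedSpace {z : E4 // z ≠ p} := by
  rw [simply_connected_iff_paths_homotopic']
  exact ⟨punctured_pathConnected p, fun a b => punctured_homotopic p a b⟩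

lemma norm_coe_ball_le (x : ↥Ball) : ‖(x : E4)‖ ≤ 1 := by
  have := x.2
  rwa [Metric.mem_closedBall, dist_zero_right] at this

lemma ball_punctured_sc (pB : ↥Ball) :
    SimplyConnectedSpace {x : ↥Ball // x ≠ pB} := by
  set p : E4 := (pB : E4) with hpdef
  have hple : ‖p‖ ≤ 1 := norm_coe_ball_le pB
  rcases eq_or_lt_of_le hple with hpeq | hplt
  · -- boundary point : contract to 0
    have hne0 : ∀ (s : unitInterval) (x : {x : ↥Ball // x ≠ pB}),
        (1 - (s:ℝ)) • ((x : ↥Ball) : E4) ∈ Ball := by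
      intro s x
      rw [Metric.mem_closedBall, dist_zero_right, norm_smul, Real.norm_eq_abs,
        abs_of_nonneg (by linarith [s.2.2] : (0:ℝ) ≤ 1 - s)]
      have hx := norm_coe_ball_le (x : ↥Ball)
      nlinarith [s.2.1, s.2.2, norm_nonneg ((x : ↥Ball) : E4)]
    have hnep : ∀ (s : unitInterval) (x : {x : ↥Ball // x ≠ pB}),
        (⟨(1 - (s:ℝ)) • ((x : ↥Ball) : E4), hne0 s x⟩ : ↥Ball) ≠ pB := by
      intro s x heq
      have hval : (1 - (s:ℝ)) • ((x : ↥Ball) : E4) = p := congrArg Subtype.val heq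
      have hx1 := norm_coe_ball_le (x : ↥Ball)
      have hnorm : (1 - (s:ℝ)) * ‖((x : ↥Ball) : E4)‖ = 1 := by
        have h5 := congrArg norm hval
        rw [norm_smul, Real.norm_eq_abs,
          abs_of_nonneg (by linarith [s.2.2] : (0:ℝ) ≤ 1 - s)] at h5
        rw [h5, hpeq]
      have hs0 : (s:ℝ) = 0 := by nlinarith [s.2.1, s.2.2, norm_nonneg ((x : ↥Ball) : E4)]
      have hx2 : ((x : ↥Ball) : E4) = p := by
        rw [hs0] at hval; simpa using hval
      exact x.2 (Subtype.ext hx2)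
    have hcontr : ContractibleSpace {x : ↥Ball // x ≠ pB} := by
      rw [contractible_iff_id_nullhomotopic]
      have h0mem : (0:E4) ∈ Ball := by simp
      have h0ne : (⟨0, h0mem⟩ : ↥Ball) ≠ pB := by
        intro heq
        have h6 : (0:E4) = p := congrArg Subtype.val heq
        rw [← h6] at hpeq; simp at hpeq
      have Hcont : Continuous (fun q : unitInterval × {x : ↥Ball // x ≠ pB} =>
          ((⟨⟨(1 - (q.1:ℝ)) • ((q.2 : ↥Ball) : E4), hne0 q.1 q.2⟩, hnep q.1 q.2⟩ : {x : ↥Ball // x ≠ pB}))) := by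
        refine Continuous.subtype_mk (Continuous.subtype_mk ?_ _) _
        have c1 : Continuous fun q : unitInterval × {x : ↥Ball // x ≠ pB} => (q.1 : ℝ) :=
          continuous_subtype_val.comp continuous_fst
        have c2 : Continuous fun q : unitInterval × {x : ↥Ball // x ≠ pB} => ((q.2 : ↥Ball) : E4) :=
          continuous_subtype_val.comp (continuous_subtype_val.comp continuous_snd)
        exact (continuous_const.sub c1).smul c2
      refine ⟨⟨⟨0, h0mem⟩, h0ne⟩, ⟨⟨⟨_, Hcont⟩, ?_, ?_⟩⟩⟩
      · intro x
        apply Subtype.ext; apply Subtype.ext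
        show (1 - ((0:unitInterval):ℝ)) • ((x : ↥Ball) : E4) = ((x : ↥Ball) : E4)
        simp
      · intro x
        apply Subtype.ext; apply Subtype.ext
        show (1 - ((1:unitInterval):ℝ)) • ((x : ↥Ball) : E4) = (0:E4)
        simp
    exact @SimplyConnectedSpace.ofContractible _ _ hcontr
  · -- interior point: retract from punctured space
    haveI : SimplyConnectedSpace {z : E4 // z ≠ p} := punctured_sc p
    have hιne : ∀ x : {x : ↥Ball // x ≠ pB}, ((x : ↥Ball) : E4) ≠ p := by
      intro x heq
      exact x.2 (Subtype.ext heq)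
    set ι : C({x : ↥Ball // x ≠ pB}, {z : E4 // z ≠ p}) :=
      ⟨fun x => ⟨((x : ↥Ball) : E4), hιne x⟩,
        (continuous_subtype_val.comp continuous_subtype_val).subtype_mk _⟩ with hι
    have hmax : ∀ z : {z : E4 // z ≠ p}, (0:ℝ) < max 1 ‖(z : E4)‖ :=
      fun z => lt_of_lt_of_le one_pos (le_max_left _ _)
    have hrmem : ∀ z : {z : E4 // z ≠ p}, (max 1 ‖(z : E4)‖)⁻¹ • (z : E4) ∈ Ball := by
      intro z
      rw [Metric.mem_closedBall, dist_zero_right, norm_smul, Real.norm_eq_abs,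
        abs_of_nonneg (inv_nonneg.2 (hmax z).le)]
      have h1 : (max 1 ‖(z:E4)‖)⁻¹ * ‖(z:E4)‖ ≤ (max 1 ‖(z:E4)‖)⁻¹ * (max 1 ‖(z:E4)‖) :=
        mul_le_mul_of_nonneg_left (le_max_right _ _) (inv_nonneg.2 (hmax z).le)
      rwa [inv_mul_cancel₀ (hmax z).ne'] at h1
    have hrne : ∀ z : {z : E4 // z ≠ p},
        (⟨(max 1 ‖(z : E4)‖)⁻¹ • (z : E4), hrmem z⟩ : ↥Ball) ≠ pB := by
      intro z heq
      have hval : (max 1 ‖(z : E4)‖)⁻¹ • (z : E4) = p := congrArg Subtype.val heq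
      rcases le_or_gt ‖(z : E4)‖ 1 with hz | hz
      · rw [max_eq_left hz, inv_one, one_smul] at hval
        exact z.2 hval
      · rw [max_eq_right hz.le] at hval
        have h7 := congrArg norm hval
        rw [norm_smul, Real.norm_eq_abs, abs_of_nonneg (inv_nonneg.2 (by linarith : (0:ℝ) ≤ ‖(z:E4)‖)),
          inv_mul_cancel₀ (by linarith : ‖(z:E4)‖ ≠ 0)] at h7
        rw [← h7] at hplt
        simp at hplt
    set r : C({z : E4 // z ≠ p}, {x : ↥Ball // x ≠ pB}) :=
      ⟨fun z => ⟨⟨(max 1 ‖(z : E4)‖)⁻¹ • (z : E4), hrmem z⟩, hrne z⟩, by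
        refine Continuous.subtype_mk (Continuous.subtype_mk ?_ _) _
        have c2 : Continuous fun z : {z : E4 // z ≠ p} => ((z : E4)) := continuous_subtype_val
        exact ((continuous_const.max c2.norm).inv₀ (fun z => (hmax z).ne')).smul c2⟩ with hr
    have hrι : ∀ x : {x : ↥Ball // x ≠ pB}, r (ι x) = x := by
      intro x
      apply Subtype.ext; apply Subtype.ext
      show (max 1 ‖((x : ↥Ball) : E4)‖)⁻¹ • ((x : ↥Ball) : E4) = ((x : ↥Ball) : E4)
      rw [max_eq_left (norm_coe_ball_le (x : ↥Ball)), inv_one, one_smul]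
    haveI : Nonempty {x : ↥Ball // x ≠ pB} := by
      set w : E4 := EuclideanSpace.single (0 : Fin 4) (1:ℝ) with hw
      have hwnorm : ‖w‖ = 1 := by rw [hw, EuclideanSpace.norm_single]; norm_num
      have hwmem : w ∈ Ball := by rw [Metric.mem_closedBall, dist_zero_right, hwnorm]
      refine ⟨⟨⟨w, hwmem⟩, ?_⟩⟩
      intro heq
      have : w = p := congrArg Subtype.val heq
      rw [← this, hwnorm] at hplt
      simp at hplt
    exact sc_of_retract ι r hrι


end CNHB

end

/-- The cone on a topological space `Z`: the quotient of `Z × [0,1]` obtained by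
collapsing `Z × {0}` to a single point, with the quotient topology. -/
abbrev TopCone (Z : Type) [TopologicalSpace Z] : Type :=
  Quot (fun a b : Z × unitInterval => a.2 = 0 ∧ b.2 = 0)

/-- If `Z` is a nonempty compact connected topological 3-manifold that is not simply
connected, then the cone on `Z` is not homeomorphic to the closed unit ball in
`EuclideanSpace ℝ (Fin 4)`. -/
theorem cone_not_homeomorphic_ball (Z : Type) [TopologicalSpace Z]
    [ChartedSpace (EuclideanSpace ℝ (Fin 3)) Z] [Nonempty Z] [CompactSpace Z]
    [ConnectedSpace Z] (h : ¬ SimplyConnectedSpace Z) :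
    ¬ Nonempty (TopCone Z ≃ₜ (Metric.closedBall (0 : EuclideanSpace ℝ (Fin 4)) 1)) := by
  rintro ⟨e⟩
  set z₀ : Z := Classical.arbitrary Z with hz₀
  set rel : Z × unitInterval → Z × unitInterval → Prop :=
    fun a b => a.2 = 0 ∧ b.2 = 0 with hrel
  set v : TopCone Z := Quot.mk _ (z₀, 0) with hv
  -- height function
  set ht : TopCone Z → ℝ := Quot.lift (fun a => ((a.2 : ℝ))) (by
    rintro a b ⟨h1, h2⟩
    simp [h1, h2]) with hht
  have hmkv : ∀ a : Z × unitInterval, Quot.mk rel a = v ↔ a.2 = 0 := by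
    intro a
    constructor
    · intro heq
      have h3 : ht (Quot.mk rel a) = ht v := by rw [heq]
      have h4 : ((a.2 : ℝ)) = (((0:unitInterval) : ℝ)) := h3
      exact Subtype.ext h4
    · intro h0
      exact Quot.sound ⟨h0, rfl⟩
  -- projection
  set projC : TopCone Z → Z := Quot.lift (fun a => if a.2 = 0 then z₀ else a.1) (by
    rintro a b ⟨h1, h2⟩
    simp [h1, h2]) with hprojC
  have hproj : ∀ (z : Z) (t : unitInterval), t ≠ 0 → projC (Quot.mk rel (z, t)) = z := by
    intro z t ht0
    show (if t = 0 then z₀ else z) = z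
    simp [ht0]
  set pB : ↥Ball := e v with hpB
  haveI : SimplyConnectedSpace {x : ↥Ball // x ≠ pB} := CNHB.ball_punctured_sc pB
  -- the inclusion j : Z → X
  have hone : (1 : unitInterval) ≠ 0 := fun h0 => one_ne_zero (congrArg Subtype.val h0)
  have hjne : ∀ z : Z, e (Quot.mk rel (z, 1)) ≠ pB := by
    intro z heq
    rw [hpB] at heq
    have h5 : Quot.mk rel (z, 1) = v := e.injective heq
    exact hone ((hmkv (z, 1)).1 h5)
  set jmap : Z → {x : ↥Ball // x ≠ pB} := fun z => ⟨e (Quot.mk rel (z, 1)), hjne z⟩ with hjmap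
  have hjcont : Continuous jmap := by
    refine Continuous.subtype_mk ?_ _
    exact e.continuous.comp (continuous_quot_mk.comp (continuous_id.prodMk continuous_const))
  -- F : X → Z
  have hsymm_ne : ∀ x : {x : ↥Ball // x ≠ pB}, e.symm (x : ↥Ball) ≠ v := by
    intro x heq
    apply x.2
    have : (x : ↥Ball) = e v := by
      rw [← heq, e.apply_symm_apply]
    exact Subtype.ext (congrArg Subtype.val (this.trans hpB.symm)) 
  set Fmap : {x : ↥Ball // x ≠ pB} → Z := fun x => projC (e.symm (x : ↥Ball)) with hFmap
  have hVopen : ∀ U : Set Z, IsOpen U → IsOpen {c : TopCone Z | c ≠ v ∧ projC c ∈ U} := by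
    intro U hU
    have hq : IsOpen (Quot.mk rel ⁻¹' {c : TopCone Z | c ≠ v ∧ projC c ∈ U}) → IsOpen {c : TopCone Z | c ≠ v ∧ projC c ∈ U} := by
      intro h7
      exact h7  -- coinduced topology: IsOpen s ↔ IsOpen (preimage)
    apply hq
    have hset : Quot.mk rel ⁻¹' {c : TopCone Z | c ≠ v ∧ projC c ∈ U}
        = U ×ˢ {t : unitInterval | t ≠ 0} := by
      ext a
      simp only [Set.mem_preimage, Set.mem_setOf_eq, Set.mem_prod]
      constructor
      · rintro ⟨h8, h9⟩
        have ha2 : a.2 ≠ 0 := fun h0 => h8 ((hmkv a).2 h0)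
        have : projC (Quot.mk rel a) = a.1 := by
          rw [show a = (a.1, a.2) from rfl] at *
          exact hproj a.1 a.2 ha2
        rw [this] at h9
        exact ⟨h9, ha2⟩
      · rintro ⟨h8, h9⟩
        refine ⟨fun heq => h9 ((hmkv a).1 heq), ?_⟩
        have : projC (Quot.mk rel a) = a.1 := by
          rw [show a = (a.1, a.2) from rfl] at *
          exact hproj a.1 a.2 h9
        rw [this]
        exact h8
    rw [hset]
    exact hU.prod (isOpen_compl_singleton)
  have hFcont : Continuous Fmap := by
    rw [continuous_def]
    intro U hU
    have hpre : Fmap ⁻¹' U = (fun x : {x : ↥Ball // x ≠ pB} => e.symm (x : ↥Ball)) ⁻¹'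
        {c : TopCone Z | c ≠ v ∧ projC c ∈ U} := by
      ext x
      simp only [Set.mem_preimage, Set.mem_setOf_eq]
      exact ⟨fun h9 => ⟨hsymm_ne x, h9⟩, fun h9 => h9.2⟩
    rw [hpre]
    exact ((e.symm.continuous.comp continuous_subtype_val).isOpen_preimage _ (hVopen U hU))
  have hFj : ∀ z : Z, Fmap (jmap z) = z := by
    intro z
    show projC (e.symm (e (Quot.mk rel (z, 1)))) = z
    rw [e.symm_apply_apply]
    exact hproj z 1 hone
  have : SimplyConnectedSpace Z :=
    CNHB.sc_of_retract (X' := Z) (Y := {x : ↥Ball // x ≠ pB}) ⟨jmap, hjcont⟩ ⟨Fmap, hFcont⟩ hFj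
  exact h this
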